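/- If in every iteration t ∈ [T] some player has best-response gap exceeding ε, T ≥ 64 L² D_X⁴/ε², and the CGD sum-of-regrets bound Σᵢ Regᵢ^(T) ≤ 4 L D_X² - (1/(8 L D_X²))·ε²·T holds, then Σᵢ Regᵢ^(T) ≤ -(1/(16 L D_X²))·ε²·T; combined with (λ,μ)-smoothness this yields (1/T)Σₜ SW(x^(t)) ≥ ρ(λ,μ)·OPT + ε²/(16(μ+1) L D_X²), hence some iterate exceeds the smoothness welfare bound ρ·OPT by ε²/(16(μ+1) L D_X²). -/

import Mathlib

/-- if every iterate has some player with best-response gap exceeding ε,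
T ≥ 64L²D_X⁴/ε², and the CGD sum-of-regrets bound holds, then the sum of regrets is at
most −ε²T/(16LD_X²); combined with (λ,μ)-smoothness the average welfare satisfies
(1/T)Σₜ SW(x^(t)) ≥ ρ·OPT + ε²/(16(μ+1)LD_X²), hence some iterate exceeds the smoothness
bound ρ·OPT by ε²/(16(μ+1)LD_X²). -/
theorem cgd_welfare_improvement
    (n T : ℕ) (hn : 0 < n) (hT : 0 < T)
    (L DX ε OPT lam μ R : ℝ)
    (s : ℕ → ℝ) (g : ℕ → Fin n → ℝ)
    (hL : 0 < L) (hDX : 0 < DX) (hε : 0 < ε) (hOPT : 0 < OPT) (hlam : 0 < lam)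
    (hμ : -1 < μ)
    (hgap : ∀ t ∈ Finset.Icc 1 T, ∃ i, ε < g t i)
    (hg0 : ∀ t i, 0 ≤ g t i)
    (hTlarge : 64 * L ^ 2 * DX ^ 4 / ε ^ 2 ≤ (T : ℝ))
    (hRle : R ≤ 4 * L * DX ^ 2 -
      (1 / (8 * L * DX ^ 2)) * ∑ t ∈ Finset.Icc 1 T, ∑ i, g t i ^ 2)
    (hRge : lam * OPT * T - (1 + μ) * ∑ t ∈ Finset.Icc 1 T, s t ≤ R) :
    R ≤ -((1 / (16 * L * DX ^ 2)) * ε ^ 2 * T) ∧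
    (lam / (1 + μ)) * OPT + ε ^ 2 / (16 * (μ + 1) * L * DX ^ 2) ≤
      (1 / (T : ℝ)) * ∑ t ∈ Finset.Icc 1 T, s t ∧
    ∃ t ∈ Finset.Icc 1 T,
      (lam / (1 + μ)) * OPT + ε ^ 2 / (16 * (μ + 1) * L * DX ^ 2) ≤ s t := by
  have hLD : 0 < L * DX ^ 2 := by positivity
  have hμ1 : 0 < 1 + μ := by linarith
  have hTpos : (0:ℝ) < T := by exact_mod_cast hT
  have hsum : ε ^ 2 * T ≤ ∑ t ∈ Finset.Icc 1 T, ∑ i, g t i ^ 2 := by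
    have h1 : ∀ t ∈ Finset.Icc 1 T, ε ^ 2 ≤ ∑ i, g t i ^ 2 := by
      intro t ht
      obtain ⟨i, hi⟩ := hgap t ht
      have h2 : ε ^ 2 ≤ g t i ^ 2 := by nlinarith [hg0 t i]
      exact h2.trans (Finset.single_le_sum (f := fun j => g t j ^ 2) (fun j _ => by positivity) (Finset.mem_univ i))
    calc ε ^ 2 * T = ∑ _t ∈ Finset.Icc 1 T, ε ^ 2 := by
          rw [Finset.sum_const, Nat.card_Icc, Nat.add_sub_cancel, nsmul_eq_mul]; ring
      _ ≤ _ := Finset.sum_le_sum h1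
  have hTlarge' : 64 * L ^ 2 * DX ^ 4 ≤ ε ^ 2 * T := by
    have := (div_le_iff₀ (by positivity : (0:ℝ) < ε ^ 2)).mp hTlarge
    nlinarith [this]
  have part1 : R ≤ -((1 / (16 * L * DX ^ 2)) * ε ^ 2 * T) := by
    have hmul : (1 / (8 * L * DX ^ 2)) * (ε ^ 2 * T) ≤
        (1 / (8 * L * DX ^ 2)) * ∑ t ∈ Finset.Icc 1 T, ∑ i, g t i ^ 2 :=
      mul_le_mul_of_nonneg_left hsum (by positivity)
    have h3 : R ≤ 4 * L * DX ^ 2 - (1 / (8 * L * DX ^ 2)) * (ε ^ 2 * T) := by linarith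
    have h4 : 4 * L * DX ^ 2 ≤ (1 / (16 * L * DX ^ 2)) * (ε ^ 2 * T) := by
      rw [one_div, inv_mul_eq_div, le_div_iff₀ (by positivity)]
      nlinarith [hTlarge']
    have h5 : (1 / (8 * L * DX ^ 2)) * (ε ^ 2 * T)
        = 2 * ((1 / (16 * L * DX ^ 2)) * (ε ^ 2 * T)) := by
      field_simp; ring
    calc R ≤ 4 * L * DX ^ 2 - (1 / (8 * L * DX ^ 2)) * (ε ^ 2 * T) := h3
      _ ≤ -((1 / (16 * L * DX ^ 2)) * ε ^ 2 * T) := by rw [h5] at *; nlinarith [h4]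
  have part2 : (lam / (1 + μ)) * OPT + ε ^ 2 / (16 * (μ + 1) * L * DX ^ 2) ≤
      (1 / (T : ℝ)) * ∑ t ∈ Finset.Icc 1 T, s t := by
    have h5 : lam * OPT * T + (1 / (16 * L * DX ^ 2)) * ε ^ 2 * T ≤
        (1 + μ) * ∑ t ∈ Finset.Icc 1 T, s t := by linarith
    have h6 : (T : ℝ) * ((lam / (1 + μ)) * OPT + ε ^ 2 / (16 * (μ + 1) * L * DX ^ 2))
        = (lam * OPT * T + (1 / (16 * L * DX ^ 2)) * ε ^ 2 * T) / (1 + μ) := by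
      have hden : (0:ℝ) < 16 * (μ + 1) * L * DX ^ 2 := by nlinarith
      field_simp [hμ1.ne', hLD.ne', hden.ne', (by linarith : (0:ℝ) < μ + 1).ne']
      ring
    have h7 : (T : ℝ) * ((lam / (1 + μ)) * OPT + ε ^ 2 / (16 * (μ + 1) * L * DX ^ 2))
        ≤ ∑ t ∈ Finset.Icc 1 T, s t := by
      rw [h6, div_le_iff₀ hμ1]; linarith
    calc (lam / (1 + μ)) * OPT + ε ^ 2 / (16 * (μ + 1) * L * DX ^ 2)
        = (1 / (T : ℝ)) * ((T : ℝ) * ((lam / (1 + μ)) * OPT +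
            ε ^ 2 / (16 * (μ + 1) * L * DX ^ 2))) := by
          rw [one_div, inv_mul_cancel_left₀ hTpos.ne']
      _ ≤ _ := mul_le_mul_of_nonneg_left h7 (by positivity)
  refine ⟨part1, part2, ?_⟩
  by_contra h
  push_neg at h
  have hsumlt : ∑ t ∈ Finset.Icc 1 T, s t <
      ∑ _t ∈ Finset.Icc 1 T, ((lam / (1 + μ)) * OPT + ε ^ 2 / (16 * (μ + 1) * L * DX ^ 2)) := by
    refine Finset.sum_lt_sum_of_nonempty (Finset.nonempty_Icc.mpr hT) (fun t ht => h t ht)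
  rw [Finset.sum_const, Nat.card_Icc, Nat.add_sub_cancel, nsmul_eq_mul] at hsumlt
  have h8 : (T : ℝ) * ((lam / (1 + μ)) * OPT + ε ^ 2 / (16 * (μ + 1) * L * DX ^ 2))
      ≤ ∑ t ∈ Finset.Icc 1 T, s t := by
    have := mul_le_mul_of_nonneg_left part2 (le_of_lt hTpos)
    calc (T : ℝ) * ((lam / (1 + μ)) * OPT + ε ^ 2 / (16 * (μ + 1) * L * DX ^ 2))
        ≤ (T : ℝ) * ((1 / (T : ℝ)) * ∑ t ∈ Finset.Icc 1 T, s t) := this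
      _ = ∑ t ∈ Finset.Icc 1 T, s t := by rw [one_div, mul_inv_cancel_left₀ hTpos.ne']
  linarith
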